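/- arXiv:1009.5760 — 5 statements merged into one kernel-verified Lean document; each statement's English description precedes it below -/
import Mathlib

section
/- Let Σ ≻ 0 and Σ_wz ≻ 0 be symmetric n×n matrices and μ > 0. If a symmetric matrix T satisfies T⁻¹ = (μ/(1+μ)) Σ⁻¹ + (1/(1+μ)) (Σ + Σ_wz)⁻¹ with T ≻ 0, then Σ ≺ T ≺ Σ + Σ_wz; in particular the matrix Σ_w̃ := T − Σ satisfies 0 ≺ Σ_w̃ ≺ Σ_wz. -/
open Matrix

lemma posDef_smul_aux {n : ℕ} {c : ℝ} (hc : 0 < c) {M : Matrix (Fin n) (Fin n) ℝ}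
    (hM : M.PosDef) : (c • M).PosDef := by
  refine Matrix.PosDef.of_dotProduct_mulVec_pos ?_ ?_
  · unfold Matrix.IsHermitian
    rw [Matrix.conjTranspose_smul, hM.1]
    simp
  · intro x hx
    have := hM.dotProduct_mulVec_pos hx
    simp only [Matrix.smul_mulVec, dotProduct_smul, smul_eq_mul]
    exact mul_pos hc this

lemma posDef_conj_aux {n : ℕ} {M C : Matrix (Fin n) (Fin n) ℝ} (hM : M.PosDef)
    (hC : IsUnit C) : (Cᴴ * M * C).PosDef := by
  refine Matrix.PosDef.of_dotProduct_mulVec_pos ?_ ?_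
  · exact Matrix.isHermitian_conjTranspose_mul_mul C hM.1
  · intro x hx
    have h1 : C *ᵥ x ≠ 0 := by
      intro h
      apply hx
      have hinj := Matrix.mulVec_injective_iff_isUnit.2 hC
      have : C *ᵥ x = C *ᵥ 0 := by simpa using h
      exact hinj this
    simpa only [star_mulVec, dotProduct_mulVec, vecMul_vecMul] using hM.dotProduct_mulVec_pos h1

/-- If `A, B ≻ 0` and `B - A ≻ 0` then `A⁻¹ - B⁻¹ ≻ 0`. -/
lemma inv_sub_inv_posDef {n : ℕ} {A B : Matrix (Fin n) (Fin n) ℝ}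
    (hA : A.PosDef) (hB : B.PosDef) (h : (B - A).PosDef) : (A⁻¹ - B⁻¹).PosDef := by
  have hAdet : IsUnit A.det := hA.det_pos.ne'.isUnit
  have hBdet : IsUnit B.det := hB.det_pos.ne'.isUnit
  have hAinv : A * A⁻¹ = 1 := Matrix.mul_nonsing_inv A hAdet
  have hAinv' : A⁻¹ * A = 1 := Matrix.nonsing_inv_mul A hAdet
  have hBinv : B * B⁻¹ = 1 := Matrix.mul_nonsing_inv B hBdet
  have hBinv' : B⁻¹ * B = 1 := Matrix.nonsing_inv_mul B hBdet
  -- key identity : A⁻¹ - B⁻¹ = B⁻¹ * ((B - A) + (B - A) * A⁻¹ * (B - A)) * B⁻¹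
  have key : A⁻¹ - B⁻¹ = B⁻¹ * ((B - A) + (B - A) * A⁻¹ * (B - A)) * B⁻¹ := by
    have expand : (B - A) + (B - A) * A⁻¹ * (B - A) = B * A⁻¹ * B - B := by
      simp only [Matrix.sub_mul, Matrix.mul_sub]
      rw [hAinv, Matrix.mul_assoc B A⁻¹ A, hAinv']
      simp only [Matrix.mul_one, Matrix.one_mul]
      abel
    rw [expand, Matrix.mul_sub, Matrix.sub_mul]
    have e1 : B⁻¹ * (B * A⁻¹ * B) * B⁻¹ = A⁻¹ := by
      rw [show B * A⁻¹ * B = B * (A⁻¹ * B) from Matrix.mul_assoc B A⁻¹ B,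
        ← Matrix.mul_assoc B⁻¹ B (A⁻¹ * B), hBinv', Matrix.one_mul,
        Matrix.mul_assoc A⁻¹ B B⁻¹, hBinv, Matrix.mul_one]
    have e2 : B⁻¹ * B * B⁻¹ = B⁻¹ := by rw [hBinv', Matrix.one_mul]
    rw [e1, e2]
  rw [key]
  have hinner : ((B - A) + (B - A) * A⁻¹ * (B - A)).PosDef := by
    apply Matrix.PosDef.add h
    have hBAsym : (B - A)ᴴ = B - A := h.1
    have := posDef_conj_aux hA.inv (C := B - A) ((Matrix.isUnit_iff_isUnit_det _).2 h.det_pos.ne'.isUnit)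
    rwa [hBAsym] at this
  have hBisym : (B⁻¹)ᴴ = B⁻¹ := hB.inv.1
  have := posDef_conj_aux hinner (C := B⁻¹) ((Matrix.isUnit_iff_isUnit_det _).2 hB.inv.det_pos.ne'.isUnit)
  rwa [hBisym] at this

/-- converse direction -/
lemma sub_posDef_of_inv {n : ℕ} {A B : Matrix (Fin n) (Fin n) ℝ}
    (hA : A.PosDef) (hB : B.PosDef) (h : (A⁻¹ - B⁻¹).PosDef) : (B - A).PosDef := by
  have := inv_sub_inv_posDef hB.inv hA.inv h
  rwa [Matrix.nonsing_inv_nonsing_inv A hA.det_pos.ne'.isUnit,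
    Matrix.nonsing_inv_nonsing_inv B hB.det_pos.ne'.isUnit] at this

theorem enhanced_noise_strictly_between {n : ℕ}
    (S Swz T : Matrix (Fin n) (Fin n) ℝ) (μ : ℝ)
    (hS : S.PosDef) (hwz : Swz.PosDef) (hT : T.PosDef) (hμ : 0 < μ)
    (hdef : T⁻¹ = (μ / (1 + μ)) • S⁻¹ + (1 / (1 + μ)) • (S + Swz)⁻¹) :
    (T - S).PosDef ∧ ((S + Swz) - T).PosDef := by
  have h1μ : (0:ℝ) < 1 + μ := by linarith
  have hSwzS : (S + Swz).PosDef := hS.add hwz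
  -- S⁻¹ - (S+Swz)⁻¹ ≻ 0 since (S+Swz) - S = Swz ≻ 0
  have hkey : (S⁻¹ - (S + Swz)⁻¹).PosDef := by
    apply inv_sub_inv_posDef hS hSwzS
    simpa using hwz
  constructor
  · -- T - S ≻ 0 ⟸ S⁻¹ - T⁻¹ ≻ 0
    apply sub_posDef_of_inv hS hT
    have : S⁻¹ - T⁻¹ = (1 / (1 + μ)) • (S⁻¹ - (S + Swz)⁻¹) := by
      rw [hdef]
      match_scalars <;> field_simp <;> ring
    rw [this]
    exact posDef_smul_aux (by positivity) hkey
  · -- (S+Swz) - T ≻ 0 ⟸ T⁻¹ - (S+Swz)⁻¹ ≻ 0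
    apply sub_posDef_of_inv hT hSwzS
    have : T⁻¹ - (S + Swz)⁻¹ = (μ / (1 + μ)) • (S⁻¹ - (S + Swz)⁻¹) := by
      rw [hdef]
      match_scalars <;> field_simp <;> ring
    rw [this]
    exact posDef_smul_aux (by positivity) hkey
end

section
/- Let Σ_x ≻ 0, Σ* with 0 ≺ Σ* ⪯ Σ_x, Σ_wy ≻ 0, Σ_w̃ ≻ 0 be symmetric n×n matrices, and let M ⪰ 0 satisfy M(Σ_x − Σ*) = 0 and (Σ* + Σ_w̃)⁻¹ = (Σ* + Σ_wy)⁻¹ + M. Then (Σ_x + Σ_w̃)(Σ* + Σ_w̃)⁻¹ = (Σ_x + Σ_wy)(Σ* + Σ_wy)⁻¹. -/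
open Matrix

theorem rate_preservation_identity {n : ℕ}
    (Sx Ss Swy Swt M : Matrix (Fin n) (Fin n) ℝ)
    (hSx : Sx.PosDef) (hSs : Ss.PosDef) (hle : (Sx - Ss).PosSemidef)
    (hwy : Swy.PosDef) (hwt : Swt.PosDef) (hM : M.PosSemidef)
    (hMc : M * (Sx - Ss) = 0)
    (henh : (Ss + Swt)⁻¹ = (Ss + Swy)⁻¹ + M) :
    (Sx + Swt) * (Ss + Swt)⁻¹ = (Sx + Swy) * (Ss + Swy)⁻¹ := by
  have hA : (Ss + Swy).PosDef := hSs.add hwy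
  have hB : (Ss + Swt).PosDef := hSs.add hwt
  have hDM : (Sx - Ss) * M = 0 := by
    have := congrArg Matrix.conjTranspose hMc
    rwa [Matrix.conjTranspose_mul, hle.isHermitian.eq, hM.isHermitian.eq,
      Matrix.conjTranspose_zero] at this
  have e1 : Sx + Swt = (Sx - Ss) + (Ss + Swt) := by abel
  have e2 : Sx + Swy = (Sx - Ss) + (Ss + Swy) := by abel
  have hBi : (Ss + Swt) * (Ss + Swt)⁻¹ = 1 :=
    Matrix.mul_nonsing_inv _ hB.det_pos.ne'.isUnit
  have hAi : (Ss + Swy) * (Ss + Swy)⁻¹ = 1 :=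
    Matrix.mul_nonsing_inv _ hA.det_pos.ne'.isUnit
  rw [e1, e2, Matrix.add_mul (Sx - Ss) (Ss + Swt), Matrix.add_mul (Sx - Ss) (Ss + Swy), hBi, hAi,
    henh, Matrix.mul_add, hDM, add_zero]
end

section
/- Under the hypotheses of the rate-preservation identity (M ⪰ 0, M(Σ_x − Σ*) = 0, (Σ* + Σ_w̃)⁻¹ = (Σ* + Σ_wy)⁻¹ + M, with 0 ≺ Σ* ⪯ Σ_x, Σ_wy, Σ_w̃ ≻ 0), the determinant ratios agree: det(Σ_x + Σ_w̃)/det(Σ* + Σ_w̃) = det(Σ_x + Σ_wy)/det(Σ* + Σ_wy). -/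
open Matrix

theorem rate_preservation_det_ratio {n : ℕ}
    (Sx Ss Swy Swt M : Matrix (Fin n) (Fin n) ℝ)
    (hSx : Sx.PosDef) (hSs : Ss.PosDef) (hle : (Sx - Ss).PosSemidef)
    (hwy : Swy.PosDef) (hwt : Swt.PosDef) (hM : M.PosSemidef)
    (hMc : M * (Sx - Ss) = 0)
    (henh : (Ss + Swt)⁻¹ = (Ss + Swy)⁻¹ + M) :
    (Sx + Swt).det / (Ss + Swt).det = (Sx + Swy).det / (Ss + Swy).det := by
  have hA : (Ss + Swy).PosDef := hSs.add hwy
  have hB : (Ss + Swt).PosDef := hSs.add hwt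
  have hAdet : IsUnit (Ss + Swy).det := isUnit_iff_ne_zero.2 hA.det_pos.ne'
  have hBdet : IsUnit (Ss + Swt).det := isUnit_iff_ne_zero.2 hB.det_pos.ne'
  have key : (Ss + Swt)⁻¹ * (Sx - Ss) = (Ss + Swy)⁻¹ * (Sx - Ss) := by
    rw [henh, add_mul, hMc, add_zero]
  have e1 : Sx + Swt = (Ss + Swt) * (1 + (Ss + Swy)⁻¹ * (Sx - Ss)) := by
    rw [mul_add, mul_one, ← key, ← mul_assoc, mul_nonsing_inv _ hBdet, one_mul]
    abel
  have e2 : Sx + Swy = (Ss + Swy) * (1 + (Ss + Swy)⁻¹ * (Sx - Ss)) := by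
    rw [mul_add, mul_one, ← mul_assoc, mul_nonsing_inv _ hAdet, one_mul]
    abel
  rw [e1, e2, det_mul, det_mul]
  field_simp [hA.det_pos.ne', hB.det_pos.ne']
end

section
/- Let U, V, X, Y, Z be random variables with the Markov chain (U,V) − X − (Y,Z) and additionally X − Z̄ − Z for some Z̄ with (U,V) − X − (Y, Z̄, Z). Then I(U;Z̄|V) − I(U;Z|V) ≤ I(X;Z̄) − I(X;Z). -/
open Finset

/-- Probability mass of the event `f = a` under the weight function `p` on a
finite sample space. -/
noncomputable def pmfOf {Ω α : Type*} [Fintype Ω] [DecidableEq α]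
    (p : Ω → ℝ) (f : Ω → α) (a : α) : ℝ :=
  ∑ ω ∈ univ.filter (fun ω => f ω = a), p ω

/-- Shannon entropy (natural log) of a finite-valued random variable. -/
noncomputable def entropy {Ω α : Type*} [Fintype Ω] [Fintype α] [DecidableEq α]
    (p : Ω → ℝ) (f : Ω → α) : ℝ :=
  -∑ a, pmfOf p f a * Real.log (pmfOf p f a)

/-- Mutual information `I(f;g)`. -/
noncomputable def mutInfo {Ω α β : Type*} [Fintype Ω] [Fintype α] [DecidableEq α]
    [Fintype β] [DecidableEq β] (p : Ω → ℝ) (f : Ω → α) (g : Ω → β) : ℝ :=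
  entropy p f + entropy p g - entropy p (fun ω => (f ω, g ω))

/-- Conditional mutual information `I(f;g|h)`. -/
noncomputable def condMutInfo {Ω α β γ : Type*} [Fintype Ω] [Fintype α] [DecidableEq α]
    [Fintype β] [DecidableEq β] [Fintype γ] [DecidableEq γ]
    (p : Ω → ℝ) (f : Ω → α) (g : Ω → β) (h : Ω → γ) : ℝ :=
  entropy p (fun ω => (f ω, h ω)) + entropy p (fun ω => (g ω, h ω)) -
    entropy p (fun ω => (f ω, g ω, h ω)) - entropy p h

/-- Markov chain `f - g - h`: conditional independence of `f` and `h` given `g`. -/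
def Markov {Ω α β γ : Type*} [Fintype Ω] [DecidableEq α] [DecidableEq β] [DecidableEq γ]
    (p : Ω → ℝ) (f : Ω → α) (g : Ω → β) (h : Ω → γ) : Prop :=
  ∀ a b c,
    pmfOf p (fun ω => (f ω, g ω, h ω)) (a, b, c) * pmfOf p g b =
      pmfOf p (fun ω => (f ω, g ω)) (a, b) * pmfOf p (fun ω => (g ω, h ω)) (b, c)

section Lemmas
variable {Ω α β γ δ : Type*} [Fintype Ω] {p : Ω → ℝ}

theorem pmfOf_nonneg [DecidableEq α] (hp : ∀ ω, 0 ≤ p ω) (f : Ω → α) (a : α) :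
    0 ≤ pmfOf p f a := Finset.sum_nonneg fun ω _ => hp ω

theorem pmfOf_congr [DecidableEq α] [DecidableEq β] {f : Ω → α} {g : Ω → β} {a : α} {b : β}
    (h : ∀ ω, f ω = a ↔ g ω = b) : pmfOf p f a = pmfOf p g b := by
  unfold pmfOf; congr 1; ext ω; simp [h ω]

theorem pmfOf_mono [DecidableEq α] [DecidableEq β] (hp : ∀ ω, 0 ≤ p ω)
    {f : Ω → α} {g : Ω → β} {a : α} {b : β}
    (h : ∀ ω, f ω = a → g ω = b) : pmfOf p f a ≤ pmfOf p g b := by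
  apply Finset.sum_le_sum_of_subset_of_nonneg
  · intro ω hω; simp only [mem_filter, mem_univ, true_and] at *; exact h ω hω
  · intro ω _ _; exact hp ω

theorem sum_pmfOf [Fintype α] [DecidableEq α] (f : Ω → α) :
    ∑ a, pmfOf p f a = ∑ ω, p ω := Finset.sum_fiberwise _ _ _

theorem pmfOf_fst_sum [Fintype α] [DecidableEq α] [DecidableEq β] (f : Ω → α) (g : Ω → β) (b : β) :
    ∑ a, pmfOf p (fun ω => (f ω, g ω)) (a, b) = pmfOf p g b := by
  unfold pmfOf
  rw [← Finset.sum_fiberwise (univ.filter fun ω => g ω = b) f p]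
  apply Finset.sum_congr rfl
  intro a _
  congr 1
  ext ω
  simp [Prod.ext_iff, and_comm]

theorem pmfOf_snd_sum [Fintype β] [DecidableEq α] [DecidableEq β] (f : Ω → α) (g : Ω → β) (a : α) :
    ∑ b, pmfOf p (fun ω => (f ω, g ω)) (a, b) = pmfOf p f a := by
  rw [show (fun b => pmfOf p (fun ω => (f ω, g ω)) (a, b))
      = fun b => pmfOf p (fun ω => (g ω, f ω)) (b, a) from
    funext fun b => pmfOf_congr (fun ω => by simp [Prod.ext_iff, and_comm])]
  exact pmfOf_fst_sum g f a

theorem pmfOf_empty [DecidableEq α] {f : Ω → α} {a : α} (h : ∀ ω, f ω ≠ a) :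
    pmfOf p f a = 0 := by
  unfold pmfOf
  rw [Finset.filter_false_of_mem (fun ω _ => h ω), Finset.sum_empty]

theorem entropy_congr [Fintype α] [DecidableEq α] [Fintype β] [DecidableEq β]
    {f : Ω → α} {f' : Ω → β} (e : α → β) (he : Function.Injective e)
    (hf : ∀ ω, f' ω = e (f ω)) : entropy p f' = entropy p f := by
  unfold entropy
  congr 1
  calc ∑ b : β, pmfOf p f' b * Real.log (pmfOf p f' b)
      = ∑ b ∈ univ.image e, pmfOf p f' b * Real.log (pmfOf p f' b) := by
        refine (Finset.sum_subset (Finset.subset_univ _) ?_).symm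
        intro b _ hb
        simp only [Finset.mem_image, Finset.mem_univ, true_and] at hb
        have : pmfOf p f' b = 0 := pmfOf_empty fun ω h => hb ⟨f ω, by rw [← hf ω, h]⟩
        simp [this]
    _ = ∑ a : α, pmfOf p f' (e a) * Real.log (pmfOf p f' (e a)) :=
        Finset.sum_image (fun x _ y _ h => he h)
    _ = ∑ a : α, pmfOf p f a * Real.log (pmfOf p f a) := by
        refine Finset.sum_congr rfl fun a _ => ?_
        have : pmfOf p f' (e a) = pmfOf p f a := pmfOf_congr fun ω => by
          rw [hf ω]; exact ⟨fun h => he h, fun h => by rw [h]⟩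
        rw [this]

end Lemmas
section Master
variable {Ω α β γ : Type*} [Fintype Ω] {p : Ω → ℝ}
variable [Fintype α] [DecidableEq α] [Fintype β] [DecidableEq β] [Fintype γ] [DecidableEq γ]

theorem marg_b (f : Ω → α) (g : Ω → β) (h : Ω → γ) (a : α) (c : γ) :
    ∑ b, pmfOf p (fun ω => (f ω, g ω, h ω)) (a, b, c)
      = pmfOf p (fun ω => (f ω, h ω)) (a, c) := by
  rw [show (fun b => pmfOf p (fun ω => (f ω, g ω, h ω)) (a, b, c))
      = fun b => pmfOf p (fun ω => (g ω, (f ω, h ω))) (b, (a, c)) from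
    funext fun b => pmfOf_congr (fun ω => by simp [Prod.ext_iff]; tauto)]
  exact pmfOf_fst_sum _ _ _

theorem marg_a (f : Ω → α) (g : Ω → β) (h : Ω → γ) (b : β) (c : γ) :
    ∑ a, pmfOf p (fun ω => (f ω, g ω, h ω)) (a, b, c)
      = pmfOf p (fun ω => (g ω, h ω)) (b, c) :=
  pmfOf_fst_sum f (fun ω => (g ω, h ω)) (b, c)

theorem condMutInfo_eq_sum (f : Ω → α) (g : Ω → β) (h : Ω → γ) :
    condMutInfo p f g h = ∑ a, ∑ b, ∑ c,
      pmfOf p (fun ω => (f ω, g ω, h ω)) (a, b, c) *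
        (Real.log (pmfOf p (fun ω => (f ω, g ω, h ω)) (a, b, c))
          + Real.log (pmfOf p h c)
          - Real.log (pmfOf p (fun ω => (f ω, h ω)) (a, c))
          - Real.log (pmfOf p (fun ω => (g ω, h ω)) (b, c))) := by
  set Q := fun a b c => pmfOf p (fun ω => (f ω, g ω, h ω)) (a, b, c) with hQ
  set Pfh := fun a c => pmfOf p (fun ω => (f ω, h ω)) (a, c) with hPfh
  set Pgh := fun b c => pmfOf p (fun ω => (g ω, h ω)) (b, c) with hPgh
  set Ph := fun c => pmfOf p h c with hPh
  have hb : ∀ a c, ∑ b, Q a b c = Pfh a c := fun a c => marg_b f g h a c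
  have ha : ∀ b c, ∑ a, Q a b c = Pgh b c := fun b c => marg_a f g h b c
  have hfc : ∀ c, ∑ a, Pfh a c = Ph c := fun c => pmfOf_fst_sum f h c
  have S1 : ∑ a, ∑ b, ∑ c, Q a b c * Real.log (Q a b c)
      = - entropy p (fun ω => (f ω, g ω, h ω)) := by
    unfold entropy
    rw [neg_neg, Fintype.sum_prod_type]
    refine Finset.sum_congr rfl fun a _ => ?_
    rw [Fintype.sum_prod_type]
  have S2 : ∑ a, ∑ b, ∑ c, Q a b c * Real.log (Ph c) = - entropy p h := by
    unfold entropy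
    rw [neg_neg]
    have step1 : ∀ a, ∑ b, ∑ c, Q a b c * Real.log (Ph c)
        = ∑ c, Pfh a c * Real.log (Ph c) := by
      intro a
      rw [Finset.sum_comm]
      refine Finset.sum_congr rfl fun c _ => ?_
      rw [← Finset.sum_mul, hb]
    simp only [step1]
    rw [Finset.sum_comm]
    refine Finset.sum_congr rfl fun c _ => ?_
    rw [← Finset.sum_mul, hfc]
  have S3 : ∑ a, ∑ b, ∑ c, Q a b c * Real.log (Pfh a c)
      = - entropy p (fun ω => (f ω, h ω)) := by
    unfold entropy
    rw [neg_neg, Fintype.sum_prod_type]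
    refine Finset.sum_congr rfl fun a _ => ?_
    conv_lhs => rw [Finset.sum_comm]
    refine Finset.sum_congr rfl fun c _ => ?_
    rw [← Finset.sum_mul, hb]
  have S4 : ∑ a, ∑ b, ∑ c, Q a b c * Real.log (Pgh b c)
      = - entropy p (fun ω => (g ω, h ω)) := by
    unfold entropy
    rw [neg_neg, Fintype.sum_prod_type]
    conv_lhs => rw [Finset.sum_comm]
    refine Finset.sum_congr rfl fun b _ => ?_
    conv_lhs => rw [Finset.sum_comm]
    refine Finset.sum_congr rfl fun c _ => ?_
    rw [← Finset.sum_mul, ha]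
  have expand : ∑ a, ∑ b, ∑ c, Q a b c *
        (Real.log (Q a b c) + Real.log (Ph c) - Real.log (Pfh a c) - Real.log (Pgh b c))
      = (∑ a, ∑ b, ∑ c, Q a b c * Real.log (Q a b c))
        + (∑ a, ∑ b, ∑ c, Q a b c * Real.log (Ph c))
        - (∑ a, ∑ b, ∑ c, Q a b c * Real.log (Pfh a c))
        - (∑ a, ∑ b, ∑ c, Q a b c * Real.log (Pgh b c)) := by
    simp only [mul_add, mul_sub, Finset.sum_add_distrib, Finset.sum_sub_distrib]
  rw [expand, S1, S2, S3, S4]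
  unfold condMutInfo
  ring

theorem pmfOf_triple_le_third (hp : ∀ ω, 0 ≤ p ω) (f : Ω → α) (g : Ω → β) (h : Ω → γ)
    (a : α) (b : β) (c : γ) :
    pmfOf p (fun ω => (f ω, g ω, h ω)) (a, b, c) ≤ pmfOf p h c :=
  pmfOf_mono hp fun ω hω => by simp [Prod.ext_iff] at hω; exact hω.2.2

theorem pmfOf_triple_le_fh (hp : ∀ ω, 0 ≤ p ω) (f : Ω → α) (g : Ω → β) (h : Ω → γ)
    (a : α) (b : β) (c : γ) :
    pmfOf p (fun ω => (f ω, g ω, h ω)) (a, b, c) ≤ pmfOf p (fun ω => (f ω, h ω)) (a, c) :=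
  pmfOf_mono hp fun ω hω => by simp [Prod.ext_iff] at hω ⊢; exact ⟨hω.1, hω.2.2⟩

theorem pmfOf_triple_le_gh (hp : ∀ ω, 0 ≤ p ω) (f : Ω → α) (g : Ω → β) (h : Ω → γ)
    (a : α) (b : β) (c : γ) :
    pmfOf p (fun ω => (f ω, g ω, h ω)) (a, b, c) ≤ pmfOf p (fun ω => (g ω, h ω)) (b, c) :=
  pmfOf_mono hp fun ω hω => by simp [Prod.ext_iff] at hω ⊢; exact hω.2

theorem condMutInfo_nonneg (hp : ∀ ω, 0 ≤ p ω) (f : Ω → α) (g : Ω → β) (h : Ω → γ) :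
    0 ≤ condMutInfo p f g h := by
  rw [condMutInfo_eq_sum]
  set Q := fun a b c => pmfOf p (fun ω => (f ω, g ω, h ω)) (a, b, c) with hQdef
  set Pfh := fun a c => pmfOf p (fun ω => (f ω, h ω)) (a, c) with hPfhdef
  set Pgh := fun b c => pmfOf p (fun ω => (g ω, h ω)) (b, c) with hPghdef
  set Ph := fun c => pmfOf p h c with hPhdef
  set q : α → β → γ → ℝ :=
    fun a b c => if Ph c = 0 then 0 else Pfh a c * Pgh b c / Ph c with hqdef
  have hQnn : ∀ a b c, 0 ≤ Q a b c := fun a b c => pmfOf_nonneg hp _ _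
  have hPfhnn : ∀ a c, 0 ≤ Pfh a c := fun a c => pmfOf_nonneg hp _ _
  have hPghnn : ∀ b c, 0 ≤ Pgh b c := fun b c => pmfOf_nonneg hp _ _
  have hPhnn : ∀ c, 0 ≤ Ph c := fun c => pmfOf_nonneg hp _ _
  have hqnn : ∀ a b c, 0 ≤ q a b c := by
    intro a b c
    simp only [hqdef]
    split
    · exact le_rfl
    · exact div_nonneg (mul_nonneg (hPfhnn a c) (hPghnn b c)) (hPhnn c)
  have pointwise : ∀ a b c, Q a b c - q a b c ≤ Q a b c *
      (Real.log (Q a b c) + Real.log (Ph c)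
        - Real.log (Pfh a c) - Real.log (Pgh b c)) := by
    intro a b c
    rcases eq_or_lt_of_le (hQnn a b c) with h0 | hpos
    · rw [← h0, zero_mul, zero_sub]
      exact neg_nonpos_of_nonneg (hqnn a b c)
    · have hPh : 0 < Ph c := lt_of_lt_of_le hpos (pmfOf_triple_le_third hp f g h a b c)
      have hPfh : 0 < Pfh a c := lt_of_lt_of_le hpos (pmfOf_triple_le_fh hp f g h a b c)
      have hPgh : 0 < Pgh b c := lt_of_lt_of_le hpos (pmfOf_triple_le_gh hp f g h a b c)
      have hq0 : q a b c = Pfh a c * Pgh b c / Ph c := by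
        simp only [hqdef]; rw [if_neg (ne_of_gt hPh)]
      have hqpos : 0 < q a b c := by rw [hq0]; positivity
      have hlog := Real.log_le_sub_one_of_pos (div_pos hqpos hpos)
      rw [Real.log_div (ne_of_gt hqpos) (ne_of_gt hpos)] at hlog
      have h2 : Q a b c * (Real.log (q a b c) - Real.log (Q a b c)) ≤ q a b c - Q a b c := by
        have := mul_le_mul_of_nonneg_left hlog (le_of_lt hpos)
        calc Q a b c * (Real.log (q a b c) - Real.log (Q a b c))
            ≤ Q a b c * (q a b c / Q a b c - 1) := this
          _ = q a b c - Q a b c := by field_simp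
      have h3 : Real.log (q a b c)
          = Real.log (Pfh a c) + Real.log (Pgh b c) - Real.log (Ph c) := by
        rw [hq0, Real.log_div (by positivity) (ne_of_gt hPh),
          Real.log_mul (ne_of_gt hPfh) (ne_of_gt hPgh)]
      rw [h3] at h2
      have h4 : Q a b c * (Real.log (Q a b c) + Real.log (Ph c)
            - Real.log (Pfh a c) - Real.log (Pgh b c))
          = -(Q a b c * (Real.log (Pfh a c) + Real.log (Pgh b c) - Real.log (Ph c)
            - Real.log (Q a b c))) := by ring
      linarith [h2, h4]
  have hb : ∀ a c, ∑ b, Q a b c = Pfh a c := fun a c => marg_b f g h a c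
  have hfc : ∀ c, ∑ a, Pfh a c = Ph c := fun c => pmfOf_fst_sum f h c
  have hgc : ∀ c, ∑ b, Pgh b c = Ph c := fun c => pmfOf_fst_sum g h c
  have sumQ : ∑ a, ∑ b, ∑ c, Q a b c = ∑ c, Ph c := by
    have : ∀ a, ∑ b, ∑ c, Q a b c = ∑ c, Pfh a c := by
      intro a
      conv_lhs => rw [Finset.sum_comm]
      exact Finset.sum_congr rfl fun c _ => hb a c
    simp only [this]
    conv_lhs => rw [Finset.sum_comm]
    exact Finset.sum_congr rfl fun c _ => hfc c
  have sumq : ∑ a, ∑ b, ∑ c, q a b c = ∑ c, Ph c := by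
    have inner : ∀ a, ∑ b, ∑ c, q a b c = ∑ c, ∑ b, q a b c := fun a => Finset.sum_comm
    simp only [inner]
    conv_lhs => rw [Finset.sum_comm]
    refine Finset.sum_congr rfl fun c _ => ?_
    rcases eq_or_ne (Ph c) 0 with h0 | h0
    · simp only [hqdef, if_pos h0]
      simp [h0]
    · simp only [hqdef, if_neg h0]
      have e1 : ∀ a, ∑ b, Pfh a c * Pgh b c / Ph c = Pfh a c * Ph c / Ph c := by
        intro a
        rw [← Finset.sum_div, ← Finset.mul_sum, hgc c]
      simp only [e1]
      have e2 : ∀ a, Pfh a c * Ph c / Ph c = Pfh a c := fun a => by field_simp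
      simp only [e2]
      exact hfc c
  have total : ∑ a, ∑ b, ∑ c, (Q a b c - q a b c) = 0 := by
    simp only [Finset.sum_sub_distrib]
    rw [sumQ, sumq]
    ring
  calc (0:ℝ) = ∑ a, ∑ b, ∑ c, (Q a b c - q a b c) := total.symm
    _ ≤ ∑ a, ∑ b, ∑ c, Q a b c *
        (Real.log (Q a b c) + Real.log (Ph c)
          - Real.log (Pfh a c) - Real.log (Pgh b c)) :=
      Finset.sum_le_sum fun a _ => Finset.sum_le_sum fun b _ =>
        Finset.sum_le_sum fun c _ => pointwise a b c

theorem condMutInfo_eq_zero (hp : ∀ ω, 0 ≤ p ω) {f : Ω → α} {g : Ω → β} {h : Ω → γ}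
    (hM : Markov p f h g) : condMutInfo p f g h = 0 := by
  rw [condMutInfo_eq_sum]
  refine Finset.sum_eq_zero fun a _ => Finset.sum_eq_zero fun b _ =>
    Finset.sum_eq_zero fun c _ => ?_
  set Q := pmfOf p (fun ω => (f ω, g ω, h ω)) (a, b, c) with hQdef
  set Pfh := pmfOf p (fun ω => (f ω, h ω)) (a, c) with hPfhdef
  set Pgh := pmfOf p (fun ω => (g ω, h ω)) (b, c) with hPghdef
  set Ph := pmfOf p h c with hPhdef
  have hMabc := hM a c b
  have e1 : pmfOf p (fun ω => (f ω, h ω, g ω)) (a, c, b) = Q :=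
    pmfOf_congr fun ω => by simp [Prod.ext_iff]; tauto
  have e2 : pmfOf p (fun ω => (h ω, g ω)) (c, b) = Pgh :=
    pmfOf_congr fun ω => by simp [Prod.ext_iff]; tauto
  rw [e1, e2] at hMabc
  -- hMabc : Q * Ph = Pfh * Pgh
  rcases eq_or_lt_of_le (pmfOf_nonneg hp (fun ω => (f ω, g ω, h ω)) (a, b, c)) with h0 | hpos
  · rw [← hQdef] at h0
    rw [← h0, zero_mul]
  · rw [← hQdef] at hpos
    have hPh : 0 < Ph := lt_of_lt_of_le hpos (pmfOf_triple_le_third hp f g h a b c)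
    have hprod : 0 < Pfh * Pgh := by rw [← hMabc]; positivity
    have hPfh : 0 < Pfh := by
      rcases (show (0:ℝ) ≤ Pfh from pmfOf_nonneg hp _ _).lt_or_eq with hh | hh
      · exact hh
      · exfalso; rw [← hh, zero_mul] at hprod; exact lt_irrefl 0 hprod
    have hPgh : 0 < Pgh := by
      rcases (show (0:ℝ) ≤ Pgh from pmfOf_nonneg hp _ _).lt_or_eq with hh | hh
      · exact hh
      · exfalso; rw [← hh, mul_zero] at hprod; exact lt_irrefl 0 hprod
    have hlog := congrArg Real.log hMabc
    rw [Real.log_mul (ne_of_gt hpos) (ne_of_gt hPh),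
      Real.log_mul (ne_of_gt hPfh) (ne_of_gt hPgh)] at hlog
    have hz : Real.log Q + Real.log Ph - Real.log Pfh - Real.log Pgh = 0 := by linarith
    rw [hz, mul_zero]

theorem entropy_swap (f : Ω → α) (g : Ω → β) :
    entropy p (fun ω => (g ω, f ω)) = entropy p (fun ω => (f ω, g ω)) :=
  entropy_congr (fun x : α × β => (x.2, x.1))
    ((show Function.LeftInverse (fun y : β × α => (y.2, y.1))
        (fun x : α × β => (x.2, x.1)) from fun x => rfl).injective)
    (fun ω => rfl)

theorem entropy_swap23 (f : Ω → α) (g : Ω → β) (h : Ω → γ) :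
    entropy p (fun ω => (f ω, h ω, g ω)) = entropy p (fun ω => (f ω, g ω, h ω)) :=
  entropy_congr (fun x : α × β × γ => (x.1, x.2.2, x.2.1))
    ((show Function.LeftInverse (fun y : α × γ × β => (y.1, y.2.2, y.2.1))
        (fun x : α × β × γ => (x.1, x.2.2, x.2.1)) from fun x => rfl).injective)
    (fun ω => rfl)

theorem entropy_assoc13 (f : Ω → α) (g : Ω → β) (h : Ω → γ) :
    entropy p (fun ω => ((f ω, g ω), h ω)) = entropy p (fun ω => (f ω, h ω, g ω)) :=
  entropy_congr (fun x : α × γ × β => ((x.1, x.2.2), x.2.1))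
    ((show Function.LeftInverse (fun y : (α × β) × γ => (y.1.1, y.2, y.1.2))
        (fun x : α × γ × β => ((x.1, x.2.2), x.2.1)) from fun x => rfl).injective)
    (fun ω => rfl)

theorem entropy_assoc23 (f : Ω → α) (g : Ω → β) (h : Ω → γ) :
    entropy p (fun ω => ((f ω, g ω), h ω)) = entropy p (fun ω => (g ω, h ω, f ω)) :=
  entropy_congr (fun x : β × γ × α => ((x.2.2, x.1), x.2.1))
    ((show Function.LeftInverse (fun y : (α × β) × γ => (y.1.2, y.2, y.1.1))
        (fun x : β × γ × α => ((x.2.2, x.1), x.2.1)) from fun x => rfl).injective)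
    (fun ω => rfl)

theorem entropy_assoc (f : Ω → α) (g : Ω → β) (h : Ω → γ) :
    entropy p (fun ω => ((f ω, g ω), h ω)) = entropy p (fun ω => (f ω, g ω, h ω)) :=
  entropy_congr (fun x : α × β × γ => ((x.1, x.2.1), x.2.2))
    ((show Function.LeftInverse (fun y : (α × β) × γ => (y.1.1, y.1.2, y.2))
        (fun x : α × β × γ => ((x.1, x.2.1), x.2.2)) from fun x => rfl).injective)
    (fun ω => rfl)

theorem entropy4_1 {δ : Type*} [Fintype δ] [DecidableEq δ]
    (f : Ω → α) (g : Ω → β) (h : Ω → γ) (k : Ω → δ) :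
    entropy p (fun ω => (f ω, (g ω, h ω), k ω))
      = entropy p (fun ω => (f ω, h ω, g ω, k ω)) :=
  entropy_congr (fun x : α × γ × β × δ => (x.1, (x.2.2.1, x.2.1), x.2.2.2))
    ((show Function.LeftInverse (fun y : α × (β × γ) × δ => (y.1, y.2.1.2, y.2.1.1, y.2.2))
        (fun x : α × γ × β × δ => (x.1, (x.2.2.1, x.2.1), x.2.2.2)) from
      fun x => rfl).injective)
    (fun ω => rfl)

theorem entropy4_2 {δ : Type*} [Fintype δ] [DecidableEq δ]
    (f : Ω → α) (g : Ω → β) (h : Ω → γ) (k : Ω → δ) :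
    entropy p (fun ω => (f ω, (g ω, h ω), k ω))
      = entropy p (fun ω => (f ω, g ω, h ω, k ω)) :=
  entropy_congr (fun x : α × β × γ × δ => (x.1, (x.2.1, x.2.2.1), x.2.2.2))
    ((show Function.LeftInverse (fun y : α × (β × γ) × δ => (y.1, y.2.1.1, y.2.1.2, y.2.2))
        (fun x : α × β × γ × δ => (x.1, (x.2.1, x.2.2.1), x.2.2.2)) from
      fun x => rfl).injective)
    (fun ω => rfl)

theorem entropy3_pair {δ : Type*} [Fintype δ] [DecidableEq δ]
    (g : Ω → β) (h : Ω → γ) (k : Ω → δ) :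
    entropy p (fun ω => ((g ω, h ω), k ω)) = entropy p (fun ω => (h ω, g ω, k ω)) :=
  entropy_congr (fun x : γ × β × δ => ((x.2.1, x.1), x.2.2))
    ((show Function.LeftInverse (fun y : (β × γ) × δ => (y.1.2, y.1.1, y.2))
        (fun x : γ × β × δ => ((x.2.1, x.1), x.2.2)) from fun x => rfl).injective)
    (fun ω => rfl)

-- chain rule: I(f,g ; h) = I(g;h) + I(f;h|g)
theorem chain1 (f : Ω → α) (g : Ω → β) (h : Ω → γ) :
    mutInfo p (fun ω => (f ω, g ω)) h = mutInfo p g h + condMutInfo p f h g := by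
  unfold mutInfo condMutInfo
  rw [entropy_assoc13 f g h, entropy_swap h g]
  ring

-- chain rule: I(f,g ; h) = I(f;h) + I(g;h|f)
theorem chain1' (f : Ω → α) (g : Ω → β) (h : Ω → γ) :
    mutInfo p (fun ω => (f ω, g ω)) h = mutInfo p f h + condMutInfo p g h f := by
  unfold mutInfo condMutInfo
  rw [entropy_assoc23 f g h, entropy_swap g f, entropy_swap h f]
  ring

-- I(f ; g,h) = I(f;g) + I(f;h|g)
theorem chain2 (f : Ω → α) (g : Ω → β) (h : Ω → γ) :
    mutInfo p f (fun ω => (g ω, h ω)) = mutInfo p f g + condMutInfo p f h g := by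
  unfold mutInfo condMutInfo
  rw [entropy_swap h g, entropy_swap23 f g h]
  ring_nf

-- I(f ; g,h) = I(f;h) + I(f;g|h)
theorem chain2' (f : Ω → α) (g : Ω → β) (h : Ω → γ) :
    mutInfo p f (fun ω => (g ω, h ω)) = mutInfo p f h + condMutInfo p f g h := by
  unfold mutInfo condMutInfo
  ring_nf

-- I(f ; (g,h) | k) = I(f;g|k) + I(f;h|(g,k))
theorem cchain1 {δ : Type*} [Fintype δ] [DecidableEq δ]
    (f : Ω → α) (g : Ω → β) (h : Ω → γ) (k : Ω → δ) :
    condMutInfo p f (fun ω => (g ω, h ω)) k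
      = condMutInfo p f g k + condMutInfo p f h (fun ω => (g ω, k ω)) := by
  unfold condMutInfo
  rw [entropy3_pair g h k, entropy4_1 f g h k]
  ring_nf

-- I(f ; (g,h) | k) = I(f;h|k) + I(f;g|(h,k))
theorem cchain2 {δ : Type*} [Fintype δ] [DecidableEq δ]
    (f : Ω → α) (g : Ω → β) (h : Ω → γ) (k : Ω → δ) :
    condMutInfo p f (fun ω => (g ω, h ω)) k
      = condMutInfo p f h k + condMutInfo p f g (fun ω => (h ω, k ω)) := by
  unfold condMutInfo
  rw [entropy_assoc g h k, entropy4_2 f g h k]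
  ring_nf

-- data processing: Markov f - g - h implies I(f;h) ≤ I(f;g)
theorem mutInfo_le_of_markov (hp : ∀ ω, 0 ≤ p ω) {f : Ω → α} {g : Ω → β} {h : Ω → γ}
    (hM : Markov p f g h) : mutInfo p f h ≤ mutInfo p f g := by
  have c1 := chain2 (p := p) f g h
  have c2 := chain2' (p := p) f g h
  have z : condMutInfo p f h g = 0 := condMutInfo_eq_zero hp hM
  have nn := condMutInfo_nonneg hp f g h
  linarith

theorem markov_drop_third_right {δ : Type*} [Fintype δ] [DecidableEq δ]
    {f : Ω → α} {g : Ω → β} {h₁ : Ω → γ} {h₂ : Ω → δ}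
    (hM : Markov p f g (fun ω => (h₁ ω, h₂ ω))) : Markov p f g h₁ := by
  intro a b c
  have key : ∑ d, pmfOf p (fun ω => (f ω, g ω, h₁ ω, h₂ ω)) (a, b, c, d) * pmfOf p g b
      = ∑ d, pmfOf p (fun ω => (f ω, g ω)) (a, b) *
          pmfOf p (fun ω => (g ω, h₁ ω, h₂ ω)) (b, c, d) :=
    Finset.sum_congr rfl fun d _ => hM a b (c, d)
  rw [← Finset.sum_mul, ← Finset.mul_sum] at key
  have m1 : ∑ d, pmfOf p (fun ω => (f ω, g ω, h₁ ω, h₂ ω)) (a, b, c, d)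
      = pmfOf p (fun ω => (f ω, g ω, h₁ ω)) (a, b, c) := by
    rw [show (fun d => pmfOf p (fun ω => (f ω, g ω, h₁ ω, h₂ ω)) (a, b, c, d))
        = fun d => pmfOf p (fun ω => ((f ω, g ω, h₁ ω), h₂ ω)) ((a, b, c), d) from
      funext fun d => pmfOf_congr fun ω => by simp [Prod.ext_iff]; tauto]
    exact pmfOf_snd_sum _ _ _
  have m2 : ∑ d, pmfOf p (fun ω => (g ω, h₁ ω, h₂ ω)) (b, c, d)
      = pmfOf p (fun ω => (g ω, h₁ ω)) (b, c) := by
    rw [show (fun d => pmfOf p (fun ω => (g ω, h₁ ω, h₂ ω)) (b, c, d))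
        = fun d => pmfOf p (fun ω => ((g ω, h₁ ω), h₂ ω)) ((b, c), d) from
      funext fun d => pmfOf_congr fun ω => by simp [Prod.ext_iff]; tauto]
    exact pmfOf_snd_sum _ _ _
  rw [m1, m2] at key
  exact key

theorem markov_drop_third_left {δ : Type*} [Fintype δ] [DecidableEq δ]
    {f : Ω → α} {g : Ω → β} {h₁ : Ω → γ} {h₂ : Ω → δ}
    (hM : Markov p f g (fun ω => (h₁ ω, h₂ ω))) : Markov p f g h₂ := by
  intro a b d
  have key : ∑ c, pmfOf p (fun ω => (f ω, g ω, h₁ ω, h₂ ω)) (a, b, c, d) * pmfOf p g b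
      = ∑ c, pmfOf p (fun ω => (f ω, g ω)) (a, b) *
          pmfOf p (fun ω => (g ω, h₁ ω, h₂ ω)) (b, c, d) :=
    Finset.sum_congr rfl fun c _ => hM a b (c, d)
  rw [← Finset.sum_mul, ← Finset.mul_sum] at key
  have m1 : ∑ c, pmfOf p (fun ω => (f ω, g ω, h₁ ω, h₂ ω)) (a, b, c, d)
      = pmfOf p (fun ω => (f ω, g ω, h₂ ω)) (a, b, d) := by
    rw [show (fun c => pmfOf p (fun ω => (f ω, g ω, h₁ ω, h₂ ω)) (a, b, c, d))
        = fun c => pmfOf p (fun ω => (h₁ ω, (f ω, g ω, h₂ ω))) (c, (a, b, d)) from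
      funext fun c => pmfOf_congr fun ω => by simp [Prod.ext_iff]; tauto]
    exact pmfOf_fst_sum _ _ _
  have m2 : ∑ c, pmfOf p (fun ω => (g ω, h₁ ω, h₂ ω)) (b, c, d)
      = pmfOf p (fun ω => (g ω, h₂ ω)) (b, d) := by
    rw [show (fun c => pmfOf p (fun ω => (g ω, h₁ ω, h₂ ω)) (b, c, d))
        = fun c => pmfOf p (fun ω => (h₁ ω, (g ω, h₂ ω))) (c, (b, d)) from
      funext fun c => pmfOf_congr fun ω => by simp [Prod.ext_iff]; tauto]
    exact pmfOf_fst_sum _ _ _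
  rw [m1, m2] at key
  exact key

theorem markov_drop_first {δ : Type*} [Fintype δ] [DecidableEq δ]
    {f₁ : Ω → α} {f₂ : Ω → δ} {g : Ω → β} {h : Ω → γ}
    (hM : Markov p (fun ω => (f₁ ω, f₂ ω)) g h) : Markov p f₂ g h := by
  intro a' b c
  have key : ∑ a, pmfOf p (fun ω => ((f₁ ω, f₂ ω), g ω, h ω)) ((a, a'), b, c) * pmfOf p g b
      = ∑ a, pmfOf p (fun ω => ((f₁ ω, f₂ ω), g ω)) ((a, a'), b) *
          pmfOf p (fun ω => (g ω, h ω)) (b, c) :=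
    Finset.sum_congr rfl fun a _ => hM (a, a') b c
  rw [← Finset.sum_mul, ← Finset.sum_mul] at key
  have m1 : ∑ a, pmfOf p (fun ω => ((f₁ ω, f₂ ω), g ω, h ω)) ((a, a'), b, c)
      = pmfOf p (fun ω => (f₂ ω, g ω, h ω)) (a', b, c) := by
    rw [show (fun a => pmfOf p (fun ω => ((f₁ ω, f₂ ω), g ω, h ω)) ((a, a'), b, c))
        = fun a => pmfOf p (fun ω => (f₁ ω, (f₂ ω, g ω, h ω))) (a, (a', b, c)) from
      funext fun a => pmfOf_congr fun ω => by simp [Prod.ext_iff]; tauto]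
    exact pmfOf_fst_sum _ _ _
  have m2 : ∑ a, pmfOf p (fun ω => ((f₁ ω, f₂ ω), g ω)) ((a, a'), b)
      = pmfOf p (fun ω => (f₂ ω, g ω)) (a', b) := by
    rw [show (fun a => pmfOf p (fun ω => ((f₁ ω, f₂ ω), g ω)) ((a, a'), b))
        = fun a => pmfOf p (fun ω => (f₁ ω, (f₂ ω, g ω))) (a, (a', b)) from
      funext fun a => pmfOf_congr fun ω => by simp [Prod.ext_iff]; tauto]
    exact pmfOf_fst_sum _ _ _
  rw [m1, m2] at key
  exact key

theorem markov_shift {δ : Type*} [Fintype δ] [DecidableEq δ]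
    (hp : ∀ ω, 0 ≤ p ω) {f : Ω → α} {g : Ω → β} {k : Ω → γ} {h : Ω → δ}
    (hM : Markov p (fun ω => (f ω, g ω)) k h) :
    Markov p f (fun ω => (k ω, g ω)) h := by
  have hMg : Markov p g k h := markov_drop_first hM
  rintro a ⟨c, b⟩ d
  have e1 : pmfOf p (fun ω => (f ω, (k ω, g ω), h ω)) (a, (c, b), d)
      = pmfOf p (fun ω => ((f ω, g ω), k ω, h ω)) ((a, b), c, d) :=
    pmfOf_congr fun ω => by simp [Prod.ext_iff]; tauto
  have e2 : pmfOf p (fun ω => (k ω, g ω)) (c, b)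
      = pmfOf p (fun ω => (g ω, k ω)) (b, c) :=
    pmfOf_congr fun ω => by simp [Prod.ext_iff]; tauto
  have e3 : pmfOf p (fun ω => (f ω, (k ω, g ω))) (a, (c, b))
      = pmfOf p (fun ω => ((f ω, g ω), k ω)) ((a, b), c) :=
    pmfOf_congr fun ω => by simp [Prod.ext_iff]; tauto
  have e4 : pmfOf p (fun ω => ((k ω, g ω), h ω)) ((c, b), d)
      = pmfOf p (fun ω => (g ω, k ω, h ω)) (b, c, d) :=
    pmfOf_congr fun ω => by simp [Prod.ext_iff]; tauto
  rw [e1, e2, e3, e4]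
  set T := pmfOf p (fun ω => ((f ω, g ω), k ω, h ω)) ((a, b), c, d) with hT
  set S := pmfOf p (fun ω => ((f ω, g ω), k ω)) ((a, b), c) with hS
  set N := pmfOf p (fun ω => (g ω, k ω, h ω)) (b, c, d) with hN
  set M := pmfOf p (fun ω => (g ω, k ω)) (b, c) with hM'
  have h1 : T * pmfOf p k c = S * pmfOf p (fun ω => (k ω, h ω)) (c, d) := hM (a, b) c d
  have h2 : N * pmfOf p k c = M * pmfOf p (fun ω => (k ω, h ω)) (c, d) := hMg b c d
  rcases eq_or_ne (pmfOf p k c) 0 with h0 | h0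
  · have hT0 : T = 0 := by
      have hle : T ≤ pmfOf p k c := pmfOf_mono hp fun ω hω => by
        simp only [Prod.ext_iff] at hω; exact hω.2.1
      have hge : (0:ℝ) ≤ T := pmfOf_nonneg hp _ _
      rw [h0] at hle; linarith
    have hS0 : S = 0 := by
      have hle : S ≤ pmfOf p k c := pmfOf_mono hp fun ω hω => by
        simp only [Prod.ext_iff] at hω; exact hω.2
      have hge : (0:ℝ) ≤ S := pmfOf_nonneg hp _ _
      rw [h0] at hle; linarith
    rw [hT0, hS0, zero_mul, zero_mul]
  · apply mul_right_cancel₀ h0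
    calc T * M * pmfOf p k c = M * (T * pmfOf p k c) := by ring
      _ = M * (S * pmfOf p (fun ω => (k ω, h ω)) (c, d)) := by rw [h1]
      _ = S * (M * pmfOf p (fun ω => (k ω, h ω)) (c, d)) := by ring
      _ = S * (N * pmfOf p k c) := by rw [h2]
      _ = S * N * pmfOf p k c := by ring

theorem markov_compose {δ : Type*} [Fintype δ] [DecidableEq δ]
    (hp : ∀ ω, 0 ≤ p ω) {w : Ω → α} {x : Ω → β} {zb : Ω → γ} {z : Ω → δ}
    (h1 : Markov p w x (fun ω => (zb ω, z ω))) (h2 : Markov p x zb z) :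
    Markov p (fun ω => (x ω, w ω)) zb z := by
  have h3 : Markov p w x zb := markov_drop_third_right h1
  rintro ⟨bx, aw⟩ c d
  have e1 : pmfOf p (fun ω => ((x ω, w ω), zb ω, z ω)) ((bx, aw), c, d)
      = pmfOf p (fun ω => (w ω, x ω, zb ω, z ω)) (aw, bx, c, d) :=
    pmfOf_congr fun ω => by simp [Prod.ext_iff]; tauto
  have e2 : pmfOf p (fun ω => ((x ω, w ω), zb ω)) ((bx, aw), c)
      = pmfOf p (fun ω => (w ω, x ω, zb ω)) (aw, bx, c) :=
    pmfOf_congr fun ω => by simp [Prod.ext_iff]; tauto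
  rw [e1, e2]
  set T := pmfOf p (fun ω => (w ω, x ω, zb ω, z ω)) (aw, bx, c, d) with hT
  set S := pmfOf p (fun ω => (w ω, x ω, zb ω)) (aw, bx, c) with hS
  have k1 : T * pmfOf p x bx
      = pmfOf p (fun ω => (w ω, x ω)) (aw, bx) *
        pmfOf p (fun ω => (x ω, zb ω, z ω)) (bx, c, d) := h1 aw bx (c, d)
  have k3 : S * pmfOf p x bx
      = pmfOf p (fun ω => (w ω, x ω)) (aw, bx) *
        pmfOf p (fun ω => (x ω, zb ω)) (bx, c) := h3 aw bx c
  have k2 : pmfOf p (fun ω => (x ω, zb ω, z ω)) (bx, c, d) * pmfOf p zb c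
      = pmfOf p (fun ω => (x ω, zb ω)) (bx, c) *
        pmfOf p (fun ω => (zb ω, z ω)) (c, d) := h2 bx c d
  rcases eq_or_ne (pmfOf p x bx) 0 with h0 | h0
  · have hT0 : T = 0 := by
      have hle : T ≤ pmfOf p x bx := pmfOf_mono hp fun ω hω => by
        simp only [Prod.ext_iff] at hω; exact hω.2.1
      have hge : (0:ℝ) ≤ T := pmfOf_nonneg hp _ _
      rw [h0] at hle; linarith
    have hS0 : S = 0 := by
      have hle : S ≤ pmfOf p x bx := pmfOf_mono hp fun ω hω => by
        simp only [Prod.ext_iff] at hω; exact hω.2.1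
      have hge : (0:ℝ) ≤ S := pmfOf_nonneg hp _ _
      rw [h0] at hle; linarith
    rw [hT0, hS0, zero_mul, zero_mul]
  · apply mul_right_cancel₀ h0
    calc T * pmfOf p zb c * pmfOf p x bx
        = (T * pmfOf p x bx) * pmfOf p zb c := by ring
      _ = pmfOf p (fun ω => (w ω, x ω)) (aw, bx) *
          (pmfOf p (fun ω => (x ω, zb ω, z ω)) (bx, c, d) * pmfOf p zb c) := by
          rw [k1]; ring
      _ = pmfOf p (fun ω => (w ω, x ω)) (aw, bx) *
          (pmfOf p (fun ω => (x ω, zb ω)) (bx, c) *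
            pmfOf p (fun ω => (zb ω, z ω)) (c, d)) := by rw [k2]
      _ = (S * pmfOf p x bx) * pmfOf p (fun ω => (zb ω, z ω)) (c, d) := by
          rw [k3]; ring
      _ = S * pmfOf p (fun ω => (zb ω, z ω)) (c, d) * pmfOf p x bx := by ring

end Master

theorem cond_mutual_info_difference_bound
    {Ω 𝒰 𝒱 𝒳 𝒴 𝒵 𝒵' : Type*} [Fintype Ω]
    [Fintype 𝒰] [DecidableEq 𝒰] [Fintype 𝒱] [DecidableEq 𝒱]
    [Fintype 𝒳] [DecidableEq 𝒳] [Fintype 𝒴] [DecidableEq 𝒴]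
    [Fintype 𝒵] [DecidableEq 𝒵] [Fintype 𝒵'] [DecidableEq 𝒵']
    (p : Ω → ℝ) (hp : ∀ ω, 0 ≤ p ω) (hp1 : ∑ ω, p ω = 1)
    (U : Ω → 𝒰) (V : Ω → 𝒱) (X : Ω → 𝒳) (Y : Ω → 𝒴)
    (Zbar : Ω → 𝒵') (Z : Ω → 𝒵)
    (hUVX : Markov p (fun ω => (U ω, V ω)) X (fun ω => (Y ω, Zbar ω, Z ω)))
    (hXZ : Markov p X Zbar Z) :
    condMutInfo p U Zbar V - condMutInfo p U Z V ≤ mutInfo p X Zbar - mutInfo p X Z := by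
  -- Markov chains derived from the hypotheses
  have hM1 : Markov p (fun ω => (U ω, V ω)) X (fun ω => (Zbar ω, Z ω)) :=
    markov_drop_third_left hUVX
  have hMWXzb : Markov p (fun ω => (U ω, V ω)) X Zbar := markov_drop_third_right hM1
  have hMWXz : Markov p (fun ω => (U ω, V ω)) X Z := markov_drop_third_left hM1
  have hA : Markov p (fun ω => (X ω, (U ω, V ω))) Zbar Z := markov_compose hp hM1 hXZ
  have hMVz : Markov p V Zbar Z := markov_drop_first (markov_drop_first hA)
  have hshift : Markov p X (fun ω => (Zbar ω, (U ω, V ω))) Z := markov_shift hp hA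
  -- chain rules
  have A1 := chain1 (p := p) U V Zbar
  have A2 := chain1 (p := p) U V Z
  have B1 := chain1' (p := p) X (fun ω => (U ω, V ω)) Zbar
  have B1' := chain1 (p := p) X (fun ω => (U ω, V ω)) Zbar
  have B2 := chain1' (p := p) X (fun ω => (U ω, V ω)) Z
  have B2' := chain1 (p := p) X (fun ω => (U ω, V ω)) Z
  have zero1 : condMutInfo p (fun ω => (U ω, V ω)) Zbar X = 0 :=
    condMutInfo_eq_zero hp hMWXzb
  have zero2 : condMutInfo p (fun ω => (U ω, V ω)) Z X = 0 :=
    condMutInfo_eq_zero hp hMWXz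
  -- DPI for V
  have D : mutInfo p V Z ≤ mutInfo p V Zbar := mutInfo_le_of_markov hp hMVz
  -- conditional DPI
  have cc1 := cchain1 (p := p) X Zbar Z (fun ω => (U ω, V ω))
  have cc2 := cchain2 (p := p) X Zbar Z (fun ω => (U ω, V ω))
  have zero3 : condMutInfo p X Z (fun ω => (Zbar ω, (U ω, V ω))) = 0 :=
    condMutInfo_eq_zero hp hshift
  have nn3 : 0 ≤ condMutInfo p X Zbar (fun ω => (Z ω, (U ω, V ω))) :=
    condMutInfo_nonneg hp _ _ _
  linarith
end

section
/- Let Σ_x ≻ 0 (n×n), B an m_y×n matrix, E an m_z×n matrix, and let φ₁ ≥ … ≥ φ_n be the generalized eigenvalues of the pair (Σ_x^{1/2} Bᵀ B Σ_x^{1/2} + I, Σ_x^{1/2} Eᵀ E Σ_x^{1/2} + I), with exactly ρ of them greater than 1. Then the supremum over 0 ⪯ Σ ⪯ Σ_x of (1/2)[log det(BΣ_xBᵀ+I) − log det(BΣBᵀ+I)] − (1/2)[log det(EΣ_xEᵀ+I) − log det(EΣEᵀ+I)] is at most (1/2) Σ_{i=1}^{ρ} log φ_i. -/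
open Matrix Finset

/-- The positive semidefinite square root of a positive semidefinite matrix
(the definition of `Matrix.PosSemidef.sqrt` in the older Mathlib, since removed). -/
noncomputable def Matrix.PosSemidef.sqrt {n 𝕜 : Type*} [Fintype n] [DecidableEq n] [RCLike 𝕜]
    [PartialOrder 𝕜] {A : Matrix n n 𝕜} (hA : A.PosSemidef) : Matrix n n 𝕜 :=
  hA.isHermitian.eigenvectorUnitary.1 * diagonal ((↑) ∘ (Real.sqrt) ∘ hA.isHermitian.eigenvalues) *
  (star hA.isHermitian.eigenvectorUnitary : Matrix n n 𝕜)

lemma Matrix.PosSemidef.posSemidef_sqrt {m : Type*} [Fintype m] [DecidableEq m]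
    {A : Matrix m m ℝ} (hA : A.PosSemidef) : hA.sqrt.PosSemidef := by
  unfold Matrix.PosSemidef.sqrt
  have hd : (diagonal ((↑) ∘ Real.sqrt ∘ hA.isHermitian.eigenvalues : m → ℝ)).PosSemidef :=
    PosSemidef.diagonal (fun i => by simp [Real.sqrt_nonneg])
  have := hd.mul_mul_conjTranspose_same (hA.isHermitian.eigenvectorUnitary : Matrix m m ℝ)
  rwa [← star_eq_conjTranspose, ← Unitary.coe_star] at this

lemma Matrix.PosSemidef.sqrt_mul_self {m : Type*} [Fintype m] [DecidableEq m]
    {A : Matrix m m ℝ} (hA : A.PosSemidef) : hA.sqrt * hA.sqrt = A := by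
  unfold Matrix.PosSemidef.sqrt
  set U : Matrix m m ℝ := (hA.isHermitian.eigenvectorUnitary : Matrix m m ℝ) with hUdef
  have hU : star U * U = 1 :=
    (Matrix.mem_unitaryGroup_iff').mp hA.isHermitian.eigenvectorUnitary.2
  set D : Matrix m m ℝ := diagonal (RCLike.ofReal ∘ Real.sqrt ∘ hA.isHermitian.eigenvalues)
    with hDdef
  have hD : D * D = diagonal (RCLike.ofReal ∘ hA.isHermitian.eigenvalues) := by
    rw [hDdef, diagonal_mul_diagonal]
    congr 1
    funext i
    simp [Real.mul_self_sqrt (hA.eigenvalues_nonneg i)]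
  conv_rhs => rw [hA.isHermitian.spectral_theorem, Unitary.conjStarAlgAut_apply, ← hD]
  calc U * D * star U * (U * D * star U) = U * D * (star U * U) * D * star U := by
          simp only [Matrix.mul_assoc]
    _ = _ := by rw [hU, Matrix.mul_one]; simp only [Matrix.mul_assoc]; rfl

variable {n : ℕ}

lemma psd_det_nonneg {M : Matrix (Fin n) (Fin n) ℝ} (hM : M.PosSemidef) : 0 ≤ M.det := by
  rw [hM.isHermitian.det_eq_prod_eigenvalues]
  exact Finset.prod_nonneg fun i _ => by simpa using hM.eigenvalues_nonneg i

lemma psd_posDef_of_det_ne_zero {M : Matrix (Fin n) (Fin n) ℝ} (hM : M.PosSemidef)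
    (h : M.det ≠ 0) : M.PosDef := by
  have hinj : Function.Injective (M.mulVec) :=
    mulVec_injective_iff_isUnit.mpr ((isUnit_iff_isUnit_det M).mpr h.isUnit)
  obtain ⟨Bm, hB⟩ : ∃ Bm : Matrix (Fin n) (Fin n) ℝ, M = Bmᴴ * Bm :=
    ⟨hM.sqrt, by rw [hM.posSemidef_sqrt.isHermitian.eq, hM.sqrt_mul_self]⟩
  refine PosDef.of_dotProduct_mulVec_pos hM.isHermitian fun x hx => ?_
  have hBx : Bm *ᵥ x ≠ 0 := by
    intro h0
    have : M *ᵥ x = 0 := by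
      rw [hB, ← mulVec_mulVec, h0, mulVec_zero]
    exact hx (hinj (by simpa using this))
  have : star x ⬝ᵥ (M *ᵥ x) = star (Bm *ᵥ x) ⬝ᵥ (Bm *ᵥ x) := by
    rw [hB, ← mulVec_mulVec, dotProduct_mulVec, star_mulVec]
  rw [this]
  exact dotProduct_star_self_pos_iff.mpr hBx

variable {n : ℕ}

lemma eig_ge_one {M : Matrix (Fin n) (Fin n) ℝ} (hM : M.IsHermitian)
    (h : (M - 1).PosSemidef) (i : Fin n) : 1 ≤ hM.eigenvalues i := by
  set v : Fin n → ℝ := ⇑(hM.eigenvectorBasis i) with hv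
  have hv0 : v ≠ 0 := by
    have := hM.eigenvectorBasis.orthonormal.ne_zero i
    intro hc
    apply this
    ext j
    exact congrFun hc j
  have hs : 0 < star v ⬝ᵥ v := dotProduct_star_self_pos_iff.mpr hv0
  have h1 : 0 ≤ star v ⬝ᵥ ((M - 1) *ᵥ v) := h.dotProduct_mulVec_nonneg v
  have h2 : M *ᵥ v = hM.eigenvalues i • v := hM.mulVec_eigenvectorBasis i
  rw [sub_mulVec, dotProduct_sub, h2, one_mulVec, dotProduct_smul, smul_eq_mul] at h1
  nlinarith [hs]

lemma one_le_det_one_add {Ψ : Matrix (Fin n) (Fin n) ℝ} (hΨ : Ψ.PosSemidef) :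
    1 ≤ (1 + Ψ).det := by
  have hherm : (1 + Ψ).IsHermitian := isHermitian_one.add hΨ.isHermitian
  have hsub : ((1 + Ψ) - 1).PosSemidef := by simpa using hΨ
  rw [hherm.det_eq_prod_eigenvalues]
  calc (1 : ℝ) = ∏ _i : Fin n, 1 := by simp
  _ ≤ _ := Finset.prod_le_prod (fun i _ => zero_le_one)
      (fun i _ => by simpa using eig_ge_one hherm hsub i)

lemma det_mono {X Δ : Matrix (Fin n) (Fin n) ℝ} (hX : X.PosSemidef) (hΔ : Δ.PosSemidef) :
    X.det ≤ (X + Δ).det := by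
  by_cases hd : X.det = 0
  · rw [hd]
    exact psd_det_nonneg (hX.add hΔ)
  · have hW := hX.posSemidef_sqrt
    set W := hX.sqrt with hWdef
    have hWW : W * W = X := hX.sqrt_mul_self
    have hdW : W.det ≠ 0 := by
      intro h0
      apply hd
      rw [← hWW, det_mul, h0, zero_mul]
    have hWu : IsUnit W.det := hdW.isUnit
    have hWinvH : W⁻¹ᴴ = W⁻¹ := by
      rw [conjTranspose_nonsing_inv, hW.isHermitian.eq]
    have hΨ : (W⁻¹ * Δ * W⁻¹).PosSemidef := by
      have := hΔ.mul_mul_conjTranspose_same W⁻¹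
      rwa [hWinvH] at this
    have key : X + Δ = W * (1 + W⁻¹ * Δ * W⁻¹) * W := by
      rw [Matrix.mul_add, Matrix.mul_one, Matrix.add_mul, hWW]
      congr 1
      rw [← Matrix.mul_assoc, ← Matrix.mul_assoc, Matrix.mul_nonsing_inv _ hWu, Matrix.one_mul,
        Matrix.mul_assoc, Matrix.nonsing_inv_mul _ hWu, Matrix.mul_one]
    have hdX : 0 < X.det := lt_of_le_of_ne (psd_det_nonneg hX) (Ne.symm hd)
    calc X.det = X.det * 1 := by ring
    _ ≤ X.det * (1 + W⁻¹ * Δ * W⁻¹).det := by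
        exact mul_le_mul_of_nonneg_left (one_le_det_one_add hΨ) hdX.le
    _ = (X + Δ).det := by
        rw [key, det_mul, det_mul, ← hWW, det_mul]
        ring

lemma dot_cs (u w : Fin n → ℝ) : (u ⬝ᵥ w)^2 ≤ (u ⬝ᵥ u) * (w ⬝ᵥ w) := by
  simpa [dotProduct, sq] using Finset.sum_mul_sq_le_sq_mul_sq univ u w

lemma dot_self_nonneg (u : Fin n → ℝ) : 0 ≤ u ⬝ᵥ u :=
  Finset.sum_nonneg fun i _ => mul_self_nonneg _

lemma contra_transpose {X : Matrix (Fin n) (Fin n) ℝ} (h : (1 - X * Xᴴ).PosSemidef) :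
    (1 - Xᴴ * X).PosSemidef := by
  rw [conjTranspose_eq_transpose_of_trivial] at h ⊢
  have key : ∀ v : Fin n → ℝ, (Xᵀ *ᵥ v) ⬝ᵥ (Xᵀ *ᵥ v) ≤ v ⬝ᵥ v := by
    intro v
    have := h.dotProduct_mulVec_nonneg v
    rw [sub_mulVec, dotProduct_sub, one_mulVec, star_trivial, ← mulVec_mulVec,
      dotProduct_mulVec, ← mulVec_transpose] at this
    linarith
  refine PosSemidef.of_dotProduct_mulVec_nonneg ?_ ?_
  · have : (1 - Xᵀ * X)ᵀ = 1 - Xᵀ * X := by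
      rw [transpose_sub, transpose_one, transpose_mul, transpose_transpose]
    rw [IsHermitian, conjTranspose_eq_transpose_of_trivial, this]
  · intro x
    rw [sub_mulVec, dotProduct_sub, one_mulVec, star_trivial, ← mulVec_mulVec,
      dotProduct_mulVec, vecMul_transpose]
    set w := X *ᵥ x with hw
    have h1 : w ⬝ᵥ w = (Xᵀ *ᵥ w) ⬝ᵥ x := by
      rw [dotProduct_mulVec, ← mulVec_transpose]
    have hcs : ((Xᵀ *ᵥ w) ⬝ᵥ x)^2 ≤ ((Xᵀ *ᵥ w) ⬝ᵥ (Xᵀ *ᵥ w)) * (x ⬝ᵥ x) := dot_cs _ _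
    have h2 := key w
    have h3 : (0:ℝ) ≤ w ⬝ᵥ w := dot_self_nonneg w
    have h4 : (0:ℝ) ≤ x ⬝ᵥ x := dot_self_nonneg x
    nlinarith [hcs, h2, h3, h4, h1]

lemma posDef_conj {M N : Matrix (Fin n) (Fin n) ℝ} (hM : M.PosDef) (hN : IsUnit N.det) :
    (N * M * Nᴴ).PosDef := by
  refine PosDef.of_dotProduct_mulVec_pos (isHermitian_mul_mul_conjTranspose _ hM.isHermitian)
    fun x hx => ?_
  have hy : Nᴴ *ᵥ x ≠ 0 := by
    intro h0
    have hNH : IsUnit (Nᴴ).det := by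
      rwa [det_conjTranspose, star_trivial]
    have := mulVec_injective_iff_isUnit.mpr ((isUnit_iff_isUnit_det _).mpr hNH)
    exact hx (this (by simpa using h0))
  have hq : star x ⬝ᵥ ((N * M * Nᴴ) *ᵥ x) = star (Nᴴ *ᵥ x) ⬝ᵥ (M *ᵥ (Nᴴ *ᵥ x)) := by
    rw [← mulVec_mulVec, ← mulVec_mulVec, dotProduct_mulVec, star_mulVec,
      conjTranspose_conjTranspose, ← dotProduct_mulVec]
  rw [hq]
  exact hM.dotProduct_mulVec_pos hy

set_option maxHeartbeats 1600000 in
/-- Upper bound on the key rate in terms of the generalized eigenvalues of the pair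
`(Σx^{1/2} Bᵀ B Σx^{1/2} + I, Σx^{1/2} Eᵀ E Σx^{1/2} + I)`.  The generalized
eigenvalues of `(A, C)` with `C ≻ 0` are realized as the eigenvalues of the
Hermitian matrix `C^{-1/2} A C^{-1/2}`. -/
theorem key_rate_sup_bound {n my mz : ℕ}
    (Sx : Matrix (Fin n) (Fin n) ℝ) (hSx : Sx.PosDef)
    (B : Matrix (Fin my) (Fin n) ℝ) (E : Matrix (Fin mz) (Fin n) ℝ)
    (hC : (hSx.posSemidef.sqrt * Eᵀ * E * hSx.posSemidef.sqrt + 1).PosSemidef)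
    (hherm : (hC.sqrt⁻¹ *
        (hSx.posSemidef.sqrt * Bᵀ * B * hSx.posSemidef.sqrt + 1) * hC.sqrt⁻¹).IsHermitian)
    (φ : Fin n → ℝ) (hφ : φ = hherm.eigenvalues) :
    ∀ S : Matrix (Fin n) (Fin n) ℝ, S.PosSemidef → (Sx - S).PosSemidef →
      (1 / 2) * (Real.log (B * Sx * Bᵀ + 1).det - Real.log (B * S * Bᵀ + 1).det) -
        (1 / 2) * (Real.log (E * Sx * Eᵀ + 1).det - Real.log (E * S * Eᵀ + 1).det) ≤
      (1 / 2) * ∑ i ∈ univ.filter (fun i => 1 < φ i), Real.log (φ i) := by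
  intro S hS hSxS
  set P : Matrix (Fin n) (Fin n) ℝ := hSx.posSemidef.sqrt with hPdef
  set Am : Matrix (Fin n) (Fin n) ℝ := P * Bᵀ * B * P + 1 with hAmdef
  set Cm : Matrix (Fin n) (Fin n) ℝ := P * Eᵀ * E * P + 1 with hCmdef
  -- basic facts about P
  have hPpsd : P.PosSemidef := hSx.posSemidef.posSemidef_sqrt
  have hPP : P * P = Sx := hSx.posSemidef.sqrt_mul_self
  have hPH : Pᴴ = P := hPpsd.isHermitian.eq
  have hPT : Pᵀ = P := by rw [← conjTranspose_eq_transpose_of_trivial, hPH]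
  have hdP : P.det ≠ 0 := by
    intro h0
    have : Sx.det = 0 := by rw [← hPP, det_mul, h0, zero_mul]
    exact hSx.det_pos.ne' this
  have hPu : IsUnit P.det := hdP.isUnit
  -- Am, Cm are positive definite
  have hBPform : P * Bᵀ * B * P = (B * P)ᴴ * (B * P) := by
    rw [conjTranspose_mul, hPH, conjTranspose_eq_transpose_of_trivial, Matrix.mul_assoc]
  have hEPform : P * Eᵀ * E * P = (E * P)ᴴ * (E * P) := by
    rw [conjTranspose_mul, hPH, conjTranspose_eq_transpose_of_trivial, Matrix.mul_assoc]
  have hAmpd : Am.PosDef := by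
    rw [hAmdef, hBPform]
    exact Matrix.PosDef.posSemidef_add (posSemidef_conjTranspose_mul_self _) Matrix.PosDef.one
  have hCmpd : Cm.PosDef := by
    rw [hCmdef, hEPform]
    exact Matrix.PosDef.posSemidef_add (posSemidef_conjTranspose_mul_self _) Matrix.PosDef.one
  -- W = sqrt of Cm
  set W : Matrix (Fin n) (Fin n) ℝ := hC.sqrt with hWdef
  have hWpsd : W.PosSemidef := hC.posSemidef_sqrt
  have hWW : W * W = Cm := hC.sqrt_mul_self
  have hWH : Wᴴ = W := hWpsd.isHermitian.eq
  have hdW : W.det ≠ 0 := by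
    intro h0
    have : Cm.det = 0 := by rw [← hWW, det_mul, h0, zero_mul]
    exact hCmpd.det_pos.ne' this
  have hWu : IsUnit W.det := hdW.isUnit
  have hWinvH : W⁻¹ᴴ = W⁻¹ := by rw [conjTranspose_nonsing_inv, hWH]
  set G : Matrix (Fin n) (Fin n) ℝ := W⁻¹ * Am * W⁻¹ with hGdef
  have hdWinv : IsUnit (W⁻¹).det := by
    have h1 : W⁻¹.det * W.det = 1 := by
      rw [← det_mul, Matrix.nonsing_inv_mul _ hWu, det_one]
    exact IsUnit.of_mul_eq_one _ h1
  have hGpd : G.PosDef := by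
    have h2 := posDef_conj hAmpd hdWinv
    rw [hWinvH] at h2
    exact h2
  have hφpos : ∀ i, 0 < φ i := by
    rw [hφ]; exact fun i => hGpd.eigenvalues_pos i
  -- spectral decomposition of G
  set U : Matrix (Fin n) (Fin n) ℝ := (hherm.eigenvectorUnitary : Matrix (Fin n) (Fin n) ℝ)
    with hUdef
  have hUU : U * Uᴴ = 1 := by
    rw [← star_eq_conjTranspose]
    exact (Matrix.mem_unitaryGroup_iff).mp (hherm.eigenvectorUnitary).2
  have hU'U : Uᴴ * U = 1 := by
    rw [← star_eq_conjTranspose]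
    exact (Matrix.mem_unitaryGroup_iff').mp (hherm.eigenvectorUnitary).2
  have hspec : G = U * diagonal φ * Uᴴ := by
    rw [hφ, ← star_eq_conjTranspose]
    have := hherm.spectral_theorem
    rwa [RCLike.ofReal_real_eq_id, Function.id_comp] at this
  set ψ : Fin n → ℝ := fun i => min (φ i) 1 with hψdef
  have hψpos : ∀ i, 0 < ψ i := fun i => lt_min (hφpos i) one_pos
  set Gb : Matrix (Fin n) (Fin n) ℝ := U * diagonal ψ * Uᴴ with hGbdef
  have hdiagψ : (diagonal ψ).PosSemidef :=
    PosSemidef.diagonal (d := ψ) (fun i => by simpa using (hψpos i).le)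
  have hGbpsd : Gb.PosSemidef := hdiagψ.mul_mul_conjTranspose_same U
  have hGsub : (G - Gb).PosSemidef := by
    have hd : diagonal φ - diagonal ψ = diagonal (fun i => φ i - ψ i) := by
      ext i j
      by_cases h : i = j <;> simp [diagonal, h]
    have : G - Gb = U * diagonal (fun i => φ i - ψ i) * Uᴴ := by
      rw [hspec, hGbdef, ← Matrix.sub_mul, ← Matrix.mul_sub, hd]
    rw [this]
    have hdg : (diagonal (fun i => φ i - ψ i)).PosSemidef :=
      PosSemidef.diagonal (d := fun i => φ i - ψ i)
        (fun i => by simpa [hψdef] using sub_nonneg.mpr (min_le_left (φ i) 1))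
    exact hdg.mul_mul_conjTranspose_same U
  have hGbone : (1 - Gb).PosSemidef := by
    have : (1 : Matrix (Fin n) (Fin n) ℝ) - Gb = U * diagonal (fun i => 1 - ψ i) * Uᴴ := by
      have h1 : (1 : Matrix (Fin n) (Fin n) ℝ) = U * diagonal (fun _ => (1:ℝ)) * Uᴴ := by
         rw [diagonal_one, Matrix.mul_one, hUU]
      have hd : diagonal (fun _ : Fin n => (1:ℝ)) - diagonal ψ = diagonal (fun i => 1 - ψ i) := by
        ext i j
        by_cases h : i = j <;> simp [diagonal, h]
      rw [hGbdef]
      nth_rewrite 1 [h1]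
      rw [← Matrix.sub_mul, ← Matrix.mul_sub, hd]
    rw [this]
    have hdg : (diagonal (fun i => 1 - ψ i)).PosSemidef :=
      PosSemidef.diagonal (d := fun i => 1 - ψ i)
        (fun i => by simpa [hψdef] using sub_nonneg.mpr (min_le_right (φ i) 1))
    exact hdg.mul_mul_conjTranspose_same U
  have hdetGb : Gb.det = ∏ i, ψ i := by
    rw [hGbdef, det_mul, det_mul, mul_right_comm, ← det_mul, hUU, det_one, one_mul, det_diagonal]
  -- the matrix T = P⁻¹ S P⁻¹ and its square root
  have hPinvH : P⁻¹ᴴ = P⁻¹ := by rw [conjTranspose_nonsing_inv, hPH]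
  set T : Matrix (Fin n) (Fin n) ℝ := P⁻¹ * S * P⁻¹ with hTdef
  have hTpsd : T.PosSemidef := by
    have := hS.mul_mul_conjTranspose_same P⁻¹
    rwa [hPinvH] at this
  set Wt : Matrix (Fin n) (Fin n) ℝ := hTpsd.sqrt with hWtdef
  have hWtpsd : Wt.PosSemidef := hTpsd.posSemidef_sqrt
  have hWtWt : Wt * Wt = T := hTpsd.sqrt_mul_self
  have hWtH : Wtᴴ = Wt := hWtpsd.isHermitian.eq
  set R : Matrix (Fin n) (Fin n) ℝ := 1 - T with hRdef
  have hRpsd : R.PosSemidef := by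
    have key : R = P⁻¹ * (Sx - S) * P⁻¹ := by
      rw [hRdef, Matrix.mul_sub, Matrix.sub_mul, hTdef]
      congr 1
      rw [← hPP, ← Matrix.mul_assoc, Matrix.nonsing_inv_mul _ hPu, Matrix.one_mul,
        Matrix.mul_nonsing_inv _ hPu]
    rw [key]
    have := hSxS.mul_mul_conjTranspose_same P⁻¹
    rwa [hPinvH] at this
  have hPTP : P * T * P = S := by
    rw [hTdef, ← Matrix.mul_assoc, ← Matrix.mul_assoc, Matrix.mul_nonsing_inv _ hPu,
      Matrix.one_mul, Matrix.mul_assoc, Matrix.nonsing_inv_mul _ hPu, Matrix.mul_one]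
  -- determinant identities
  have hdA : (B * Sx * Bᵀ + 1).det = Am.det := by
    have h1 : B * Sx * Bᵀ = (B * P) * (P * Bᵀ) := by
      rw [← hPP]; simp only [Matrix.mul_assoc]
    rw [h1, det_mul_add_one_comm, hAmdef]; simp only [Matrix.mul_assoc]
  have hdC : (E * Sx * Eᵀ + 1).det = Cm.det := by
    have h1 : E * Sx * Eᵀ = (E * P) * (P * Eᵀ) := by
      rw [← hPP]; simp only [Matrix.mul_assoc]
    rw [h1, det_mul_add_one_comm, hCmdef]; simp only [Matrix.mul_assoc]
  have hdX : (B * S * Bᵀ + 1).det = (Wt * Am * Wt + R).det := by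
    have h1 : B * S * Bᵀ = (B * (P * Wt)) * (Wt * P * Bᵀ) := by
      rw [← hPTP, ← hWtWt]; simp only [Matrix.mul_assoc]
    have h2 : Wt * P * Bᵀ * (B * (P * Wt)) + 1 = Wt * Am * Wt + R := by
      rw [hAmdef, hRdef, ← hWtWt]
      rw [Matrix.mul_add, Matrix.add_mul, Matrix.mul_one]
      have h3 : Wt * (P * Bᵀ * B * P) * Wt = Wt * P * Bᵀ * (B * (P * Wt)) := by
        simp only [Matrix.mul_assoc]
      rw [← h3]
      abel
    rw [h1, det_mul_add_one_comm, h2]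
  have hdY : (E * S * Eᵀ + 1).det = (Wt * Cm * Wt + R).det := by
    have h1 : E * S * Eᵀ = (E * (P * Wt)) * (Wt * P * Eᵀ) := by
      rw [← hPTP, ← hWtWt]; simp only [Matrix.mul_assoc]
    have h2 : Wt * P * Eᵀ * (E * (P * Wt)) + 1 = Wt * Cm * Wt + R := by
      rw [hCmdef, hRdef, ← hWtWt]
      rw [Matrix.mul_add, Matrix.add_mul, Matrix.mul_one]
      have h3 : Wt * (P * Eᵀ * E * P) * Wt = Wt * P * Eᵀ * (E * (P * Wt)) := by
        simp only [Matrix.mul_assoc]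
      rw [← h3]
      abel
    rw [h1, det_mul_add_one_comm, h2]
  -- the matrix Z and its square root L
  set Z : Matrix (Fin n) (Fin n) ℝ := Wt * Cm * Wt + R with hZdef
  have hZ1psd : (Wt * (P * Eᵀ * E * P) * Wt).PosSemidef := by
    have h1 : Wt * (P * Eᵀ * E * P) * Wt = (E * P * Wt)ᴴ * (E * P * Wt) := by
      rw [conjTranspose_mul, conjTranspose_mul, hWtH, hPH, conjTranspose_eq_transpose_of_trivial]
      simp only [Matrix.mul_assoc]
    rw [h1]
    exact posSemidef_conjTranspose_mul_self _
  have hZeq : Z = 1 + Wt * (P * Eᵀ * E * P) * Wt := by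
    rw [hZdef, hCmdef, hRdef, ← hWtWt, Matrix.mul_add, Matrix.add_mul, Matrix.mul_one]
    abel
  have hZpd : Z.PosDef := by
    rw [hZeq]
    exact Matrix.PosDef.add_posSemidef Matrix.PosDef.one hZ1psd
  set L : Matrix (Fin n) (Fin n) ℝ := hZpd.posSemidef.sqrt with hLdef
  have hLpsd : L.PosSemidef := hZpd.posSemidef.posSemidef_sqrt
  have hLL : L * L = Z := hZpd.posSemidef.sqrt_mul_self
  have hLH : Lᴴ = L := hLpsd.isHermitian.eq
  have hdL : L.det ≠ 0 := by
    intro h0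
    have : Z.det = 0 := by rw [← hLL, det_mul, h0, zero_mul]
    exact hZpd.det_pos.ne' this
  have hLu : IsUnit L.det := hdL.isUnit
  have hLinvH : L⁻¹ᴴ = L⁻¹ := by rw [conjTranspose_nonsing_inv, hLH]
  -- step 1 : replace G by Gb
  have hWGW : W * G * W = Am := by
    rw [hGdef]
    simp only [← Matrix.mul_assoc]
    rw [Matrix.mul_nonsing_inv _ hWu, Matrix.one_mul, Matrix.mul_assoc,
      Matrix.nonsing_inv_mul _ hWu, Matrix.mul_one]
  have hKH : (Wt * W)ᴴ = W * Wt := by rw [conjTranspose_mul, hWtH, hWH]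
  have e1 : Wt * Am * Wt = (Wt * W) * G * (W * Wt) := by
    rw [← hWGW]
    simp only [Matrix.mul_assoc]
  have hXpsd : ((Wt * W) * Gb * (W * Wt) + R).PosSemidef := by
    have h4 := hGbpsd.mul_mul_conjTranspose_same (Wt * W)
    rw [hKH] at h4
    exact h4.add hRpsd
  have hDpsd : ((Wt * W) * (G - Gb) * (W * Wt)).PosSemidef := by
    have h4 := hGsub.mul_mul_conjTranspose_same (Wt * W)
    rwa [hKH] at h4
  have step1 : ((Wt * W) * Gb * (W * Wt) + R).det ≤ (Wt * Am * Wt + R).det := by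
    have hsplit : Wt * Am * Wt + R
        = ((Wt * W) * Gb * (W * Wt) + R) + (Wt * W) * (G - Gb) * (W * Wt) := by
      rw [e1, Matrix.mul_sub, Matrix.sub_mul]
      abel
    rw [hsplit]
    exact det_mono hXpsd hDpsd
  -- normalize by L
  set Q : Matrix (Fin n) (Fin n) ℝ := L⁻¹ * (Wt * W) with hQdef
  have hQH : Qᴴ = (W * Wt) * L⁻¹ := by rw [hQdef, conjTranspose_mul, hKH, hLinvH]
  set R' : Matrix (Fin n) (Fin n) ℝ := L⁻¹ * R * L⁻¹ with hR'def
  have hR'psd : R'.PosSemidef := by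
    have h4 := hRpsd.mul_mul_conjTranspose_same L⁻¹
    rwa [hLinvH] at h4
  have cancelL : ∀ M : Matrix (Fin n) (Fin n) ℝ, L * (L⁻¹ * M * L⁻¹) * L = M := by
    intro M
    simp only [← Matrix.mul_assoc]
    rw [Matrix.mul_nonsing_inv _ hLu, Matrix.one_mul, Matrix.mul_assoc _ L⁻¹ L,
      Matrix.nonsing_inv_mul _ hLu, Matrix.mul_one]
  have hQGbQ : Q * Gb * Qᴴ = L⁻¹ * ((Wt * W) * Gb * (W * Wt)) * L⁻¹ := by
    rw [hQH, hQdef]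
    simp only [Matrix.mul_assoc]
  have step2eq : (Wt * W) * Gb * (W * Wt) + R = L * (Q * Gb * Qᴴ + R') * L := by
    rw [hQGbQ, hR'def, Matrix.mul_add, Matrix.add_mul, cancelL, cancelL]
  have step2 : ((Wt * W) * Gb * (W * Wt) + R).det = Z.det * (Q * Gb * Qᴴ + R').det := by
    rw [step2eq, det_mul, det_mul, ← hLL, det_mul]
    ring
  have step3 : Q * Qᴴ + R' = 1 := by
    rw [hQH, hQdef, hR'def]
    have h5 : L⁻¹ * (Wt * W) * ((W * Wt) * L⁻¹) = L⁻¹ * (Wt * Cm * Wt) * L⁻¹ := by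
      rw [← hWW]
      simp only [Matrix.mul_assoc]
    have h6 : L⁻¹ * (Wt * Cm * Wt) * L⁻¹ + L⁻¹ * R * L⁻¹ = L⁻¹ * Z * L⁻¹ := by
      rw [hZdef, Matrix.mul_add L⁻¹ (Wt * Cm * Wt) R,
        Matrix.add_mul (L⁻¹ * (Wt * Cm * Wt)) (L⁻¹ * R) L⁻¹]
    rw [h5, h6, ← hLL]
    simp only [← Matrix.mul_assoc]
    rw [Matrix.nonsing_inv_mul _ hLu, Matrix.one_mul, Matrix.mul_nonsing_inv _ hLu]
  have hQ'Q : (1 - Qᴴ * Q).PosSemidef := by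
    apply contra_transpose
    have h7 : 1 - Q * Qᴴ = R' := by rw [← step3]; abel
    rw [h7]
    exact hR'psd
  -- the square root J of 1 - Gb
  set Dm : Matrix (Fin n) (Fin n) ℝ := 1 - Gb with hDmdef
  have hDmpsd : Dm.PosSemidef := hGbone
  set J : Matrix (Fin n) (Fin n) ℝ := hDmpsd.sqrt with hJdef
  have hJpsd : J.PosSemidef := hDmpsd.posSemidef_sqrt
  have hJJ : J * J = Dm := hDmpsd.sqrt_mul_self
  have hJH : Jᴴ = J := hJpsd.isHermitian.eq
  have step6 : Q * Gb * Qᴴ + R' = 1 - (Q * J) * (Q * J)ᴴ := by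
    have h9 : R' = 1 - Q * Qᴴ := by rw [← step3]; abel
    rw [h9, conjTranspose_mul Q J, hJH]
    have h10 : Q * J * (J * Qᴴ) = Q * Dm * Qᴴ := by
      rw [← hJJ]
      simp only [Matrix.mul_assoc]
    rw [h10, hDmdef, Matrix.mul_sub, Matrix.sub_mul, Matrix.mul_one]
    abel
  have step7 : (1 - (Q * J) * (Q * J)ᴴ).det = (1 - (Q * J)ᴴ * (Q * J)).det :=
    det_one_sub_mul_comm _ _
  have step8eq : 1 - (Q * J)ᴴ * (Q * J) = Gb + J * (1 - Qᴴ * Q) * J := by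
    rw [conjTranspose_mul Q J, hJH, Matrix.mul_sub, Matrix.sub_mul, Matrix.mul_one, hJJ, hDmdef]
    have h11 : J * Qᴴ * (Q * J) = J * (Qᴴ * Q) * J := by simp only [Matrix.mul_assoc]
    rw [h11]
    abel
  have step9 : Gb.det ≤ (1 - (Q * J)ᴴ * (Q * J)).det := by
    rw [step8eq]
    have hc := hQ'Q.mul_mul_conjTranspose_same J
    rw [hJH] at hc
    exact det_mono hGbpsd hc
  have hprodψpos : 0 < ∏ i, ψ i := Finset.prod_pos (fun i _ => hψpos i)
  -- main determinant inequality
  have main : (∏ i, ψ i) * Z.det ≤ (Wt * Am * Wt + R).det := by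
    have e2 : (∏ i, ψ i) ≤ (Q * Gb * Qᴴ + R').det := by
      rw [step6, step7, ← hdetGb]
      exact step9
    calc (∏ i, ψ i) * Z.det
        ≤ (Q * Gb * Qᴴ + R').det * Z.det :=
          mul_le_mul_of_nonneg_right e2 (psd_det_nonneg hZpd.posSemidef)
    _ = ((Wt * W) * Gb * (W * Wt) + R).det := by rw [step2]; ring
    _ ≤ (Wt * Am * Wt + R).det := step1
  -- relation between determinants of Am and Cm
  have hdetG : G.det = ∏ i, φ i := by
    rw [hφ]
    simpa using hherm.det_eq_prod_eigenvalues
  have hWinvdet : W⁻¹.det * W.det = 1 := by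
    rw [← det_mul, Matrix.nonsing_inv_mul _ hWu, det_one]
  have hCmdet : W.det * W.det = Cm.det := by rw [← hWW, det_mul]
  have hGdet2 : G.det = W⁻¹.det * Am.det * W⁻¹.det := by
    rw [hGdef, det_mul, det_mul]
  have hac : Am.det = Cm.det * ∏ i, φ i := by
    calc Am.det = (W⁻¹.det * W.det) * Am.det * (W⁻¹.det * W.det) := by rw [hWinvdet]; ring
    _ = (W.det * W.det) * (W⁻¹.det * Am.det * W⁻¹.det) := by ring
    _ = Cm.det * G.det := by rw [hCmdet, ← hGdet2]
    _ = Cm.det * ∏ i, φ i := by rw [hdetG]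
  have hprodφpos : 0 < ∏ i, φ i := Finset.prod_pos fun i _ => hφpos i
  have hZdetpos : 0 < Z.det := hZpd.det_pos
  have hdXpos : 0 < (Wt * Am * Wt + R).det := lt_of_lt_of_le (mul_pos hprodψpos hZdetpos) main
  -- logarithm facts
  have hlogAm : Real.log Am.det = Real.log Cm.det + ∑ i, Real.log (φ i) := by
    rw [hac, Real.log_mul hCmpd.det_pos.ne' hprodφpos.ne',
      Real.log_prod (fun i _ => (hφpos i).ne')]
  have hlogmain : ∑ i, Real.log (ψ i) + Real.log Z.det ≤ Real.log (Wt * Am * Wt + R).det := by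
    have h12 := Real.log_le_log (mul_pos hprodψpos hZdetpos) main
    rwa [Real.log_mul hprodψpos.ne' hZdetpos.ne',
      Real.log_prod (fun i _ => (hψpos i).ne')] at h12
  have hsum : ∑ i ∈ univ.filter (fun i => 1 < φ i), Real.log (φ i)
      = (∑ i, Real.log (φ i)) - ∑ i, Real.log (ψ i) := by
    rw [← Finset.sum_sub_distrib, Finset.sum_filter]
    apply Finset.sum_congr rfl
    intro i _
    by_cases h : 1 < φ i
    · simp only [if_pos h, hψdef, min_eq_right h.le, Real.log_one, sub_zero]
    · simp only [if_neg h, hψdef, min_eq_left (not_lt.mp h), sub_self]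
  rw [hdA, hdC, hdX, hdY, hsum, hlogAm]
  linarith [hlogmain]
end
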